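/- If z_0 is a word of length n ≥ 1 with initial character a, and b is a character different from a, then the word z = z_0 a b^n is overlapping-free: whenever z v ∈ A* z with |v| ≤ |z| - 1, we have v = ε. -/

import Mathlib

/-- If `z₀` has length `n ≥ 1` and initial character `a`, and `b ≠ a`, then
`z = z₀ a bⁿ` is overlapping-free. -/
theorem overlapping_free {A : Type*} (a b : A) (hba : b ≠ a) (z₀ : List A)
    (hlen : 1 ≤ z₀.length) (hhead : z₀.head? = some a) :
    ∀ v x : List A,
      (z₀ ++ [a] ++ List.replicate z₀.length b) ++ v =
        x ++ (z₀ ++ [a] ++ List.replicate z₀.length b) →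
      v.length ≤ (z₀ ++ [a] ++ List.replicate z₀.length b).length - 1 →
      v = [] := by
  intro v x heq hvlen
  set n := z₀.length with hn
  set z : List A := z₀ ++ [a] ++ List.replicate n b with hz
  have hzlen : z.length = 2 * n + 1 := by
    simp [hz]; omega
  by_contra hv
  have hk : 0 < v.length := List.length_pos_iff.mpr hv
  have hlx : x.length = v.length := by
    have := congrArg List.length heq
    simp only [List.length_append] at this
    omega
  set k := v.length with hkdef
  have hk2 : k ≤ 2 * n := by omega
  have h01 : (z₀ ++ [a]).length = n + 1 := by simp [hn]
  -- characters of z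
  have h0 : z[0]? = some a := by
    rw [hz, List.getElem?_append_left (by omega), List.getElem?_append_left (by omega)]
    rw [← List.head?_eq_getElem?]
    exact hhead
  have hmid : z[n]? = some a := by
    rw [hz, List.getElem?_append_left (by omega),
      List.getElem?_append_right (by omega)]
    simp [hn]
  have hb' : ∀ i, n + 1 ≤ i → i ≤ 2 * n → z[i]? = some b := by
    intro i h1 h2
    rw [hz, List.getElem?_append_right (by omega)]
    simp only [List.length_append, List.length_singleton]
    rw [List.getElem?_replicate]
    simp only [hn]
    rw [if_pos (by omega)]
  -- shift property
  have shift : ∀ i, k ≤ i → i < z.length → z[i]? = z[i - k]? := by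
    intro i h1 h2
    have heq' := congrArg (fun l => l[i]?) heq
    have lhs : (z ++ v)[i]? = z[i]? := List.getElem?_append_left h2
    have rhs : (x ++ z)[i]? = z[i - x.length]? :=
      List.getElem?_append_right (by omega)
    rw [lhs, rhs, hlx] at heq'
    exact heq'
  by_cases hkn : k ≤ n
  · have h1 : z[k + n]? = z[n]? := by
      have := shift (k + n) (by omega) (by omega)
      simpa using this
    have h2 : z[k + n]? = some b := hb' (k + n) (by omega) (by omega)
    rw [h1, hmid] at h2
    exact hba (Option.some.inj h2).symm
  · have h1 : z[k]? = z[0]? := by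
      have := shift k le_rfl (by omega)
      simpa using this
    have h2 : z[k]? = some b := hb' k (by omega) (by omega)
    rw [h1, h0] at h2
    exact hba (Option.some.inj h2).symm
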